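/- For every finite word u and every letter x, the number of distinct palindromic factors of ux is at most one more than the number of distinct palindromic factors of u: P(ux) ≤ P(u) + 1. -/

import Mathlib

/-- The number of distinct palindromic factors of a finite word `u`
(including the empty word). -/
noncomputable def palCount {A : Type*} (u : List A) : ℕ :=
  Set.ncard {p : List A | p.Palindrome ∧ p <:+: u}

lemma palSet_finite {A : Type*} (u : List A) :
    {p : List A | p.Palindrome ∧ p <:+: u}.Finite := by
  apply Set.Finite.subset u.sublists.finite_toSet
  intro p hp
  simpa using hp.2.sublist

/-- If `p` is an infix of `u ++ [x]` but not a suffix, it is an infix of `u`. -/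
lemma infix_of_not_suffix {A : Type*} {u p : List A} {x : A}
    (h : p <:+: u ++ [x]) (h2 : ¬ p <:+ u ++ [x]) : p <:+: u := by
  obtain ⟨s, t, hst⟩ := h
  rcases t.eq_nil_or_concat with rfl | ⟨t', a, rfl⟩
  · exact absurd ⟨s, by simpa using hst⟩ h2
  · have : (s ++ p ++ t') ++ [a] = u ++ [x] := by
      simpa [List.append_assoc, List.concat_eq_append] using hst
    obtain ⟨h3, -⟩ := List.append_inj' this rfl
    exact ⟨s, t', h3⟩

theorem palCount_append_singleton_le {A : Type*} (u : List A) (x : A) :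
    palCount (u ++ [x]) ≤ palCount u + 1 := by
  set S := {p : List A | p.Palindrome ∧ p <:+: u ++ [x]} with hSdef
  set T := {p : List A | p.Palindrome ∧ p <:+: u} with hTdef
  have hS : S.Finite := palSet_finite _
  have hT : T.Finite := palSet_finite _
  -- any element of S \ T is a palindromic suffix of u ++ [x]
  have hsuf : ∀ p ∈ S \ T, p.Palindrome ∧ p <:+ u ++ [x] := by
    rintro p ⟨⟨hpal, hinf⟩, hpT⟩
    refine ⟨hpal, ?_⟩
    by_contra hns
    exact hpT ⟨hpal, infix_of_not_suffix hinf hns⟩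
  -- S \ T is a subsingleton
  have hsub : (S \ T).Subsingleton := by
    intro p hp q hq
    obtain ⟨hppal, hpsuf⟩ := hsuf p hp
    obtain ⟨hqpal, hqsuf⟩ := hsuf q hq
    by_contra hne
    -- wlog one is a strict suffix of the other
    wlog hpq : p <:+ q generalizing p q
    · rcases List.suffix_or_suffix_of_suffix hpsuf hqsuf with h | h
      · exact hpq h
      · exact this hq hp hqpal hqsuf hppal hpsuf (Ne.symm hne) h
    -- p is a prefix of q since both are palindromes
    have hpre : p <+: q := by
      have := hpq.reverse
      rwa [hppal.reverse_eq, hqpal.reverse_eq] at this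
    obtain ⟨t, rfl⟩ := hpre
    obtain ⟨s, hs⟩ := hqsuf
    rcases t.eq_nil_or_concat with rfl | ⟨t', a, rfl⟩
    · exact hne (by simp)
    · have : (s ++ p ++ t') ++ [a] = u ++ [x] := by
        simpa [List.append_assoc, List.concat_eq_append] using hs
      obtain ⟨h3, -⟩ := List.append_inj' this rfl
      exact hp.2 ⟨hppal, s, t', h3⟩
  calc S.ncard = (S ∩ T ∪ S \ T).ncard := by rw [Set.inter_union_diff]
    _ ≤ (S ∩ T).ncard + (S \ T).ncard := Set.ncard_union_le _ _
    _ ≤ T.ncard + 1 := by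
        refine add_le_add (Set.ncard_le_ncard Set.inter_subset_right hT) ?_
        exact (Set.ncard_le_one hS.diff).2 fun a ha b hb => hsub ha hb
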